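/- A connected k-truss on n vertices has at least (n−1)(1 + k/2) edges. -/

import Mathlib

/-- A graph is a `k`-truss if it has no isolated vertices and every edge is
contained in at least `k` triangles. -/
def SimpleGraph.IsTruss {V : Type*} (G : SimpleGraph V) (k : ℕ) : Prop :=
  (∀ v : V, ∃ u : V, G.Adj v u) ∧
  ∀ ⦃u v : V⦄, G.Adj u v → k ≤ {w : V | G.Adj u w ∧ G.Adj v w}.ncard


open Finset
namespace TrussAux
open scoped Classical
variable {V : Type*} [Fintype V]

noncomputable def eS (G : SimpleGraph V) (e : Sym2 V) : Finset V :=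
  Finset.univ.filter (fun w => w ∈ e ∨ ∀ x ∈ e, G.Adj x w)

lemma mem_eS {G : SimpleGraph V} {e : Sym2 V} {w : V} :
    w ∈ eS G e ↔ w ∈ e ∨ ∀ x ∈ e, G.Adj x w := by simp [eS]

def Good (G : SimpleGraph V) (σ : V ≃ Fin (Fintype.card V)) (e : Sym2 V) : Prop :=
  ∃ u ∈ e, ∀ w ∈ eS G e, σ u ≤ σ w

def Hgraph (G : SimpleGraph V) (σ : V ≃ Fin (Fintype.card V)) : SimpleGraph V where
  Adj a b := G.Adj a b ∧ Good G σ s(a, b)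
  symm := by
    constructor
    intro a b hh
    refine ⟨hh.1.symm, ?_⟩
    rw [Sym2.eq_swap]; exact hh.2
  loopless := ⟨fun a hh => G.loopless.irrefl a hh.1⟩

lemma reach_of_adj (G : SimpleGraph V) (σ : V ≃ Fin (Fintype.card V)) :
    ∀ m : ℕ, ∀ a b : V, G.Adj a b → (σ a : ℕ) + (σ b : ℕ) = m →
      (Hgraph G σ).Reachable a b := by
  intro m
  induction m using Nat.strong_induction_on with
  | _ m ih =>
    intro a b hab hm
    have ha : a ∈ eS G s(a, b) := mem_eS.2 (Or.inl (Sym2.mem_mk_left a b))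
    have hb : b ∈ eS G s(a, b) := mem_eS.2 (Or.inl (Sym2.mem_mk_right a b))
    obtain ⟨x, hx, hmin⟩ := Finset.exists_min_image (eS G s(a, b)) (fun w => σ w) ⟨a, ha⟩
    by_cases hxe : x ∈ s(a, b)
    · exact SimpleGraph.Adj.reachable (And.intro hab ⟨x, hxe, hmin⟩)
    · have hcn : ∀ y ∈ s(a, b), G.Adj y x := (mem_eS.1 hx).resolve_left hxe
      have hax : G.Adj a x := hcn a (Sym2.mem_mk_left a b)
      have hbx : G.Adj b x := hcn b (Sym2.mem_mk_right a b)
      have hxa : (σ x : ℕ) < σ a := by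
        have := hmin a ha
        have hne : x ≠ a := fun hEq => hxe (hEq ▸ Sym2.mem_mk_left a b)
        have : σ x ≠ σ a := fun hEq => hne (σ.injective hEq)
        exact lt_of_le_of_ne (by exact_mod_cast ‹σ x ≤ σ a›) (fun hEq => ‹σ x ≠ σ a› (Fin.ext hEq))
      have hxb : (σ x : ℕ) < σ b := by
        have h1 := hmin b hb
        have hne : x ≠ b := fun hEq => hxe (hEq ▸ Sym2.mem_mk_right a b)
        have h2 : σ x ≠ σ b := fun hEq => hne (σ.injective hEq)
        exact lt_of_le_of_ne (by exact_mod_cast h1) (fun hEq => h2 (Fin.ext hEq))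
      have r1 : (Hgraph G σ).Reachable a x :=
        ih ((σ a : ℕ) + (σ x : ℕ)) (by omega) a x hax rfl
      have r2 : (Hgraph G σ).Reachable x b :=
        ih ((σ x : ℕ) + (σ b : ℕ)) (by omega) x b hbx.symm rfl
      exact r1.trans r2

lemma hgraph_connected (G : SimpleGraph V) (σ : V ≃ Fin (Fintype.card V))
    (hc : G.Connected) : (Hgraph G σ).Connected := by
  have hmono : ∀ a b : V, G.Reachable a b → (Hgraph G σ).Reachable a b := by
    intro a b hr
    obtain ⟨w⟩ := hr
    induction w with
    | nil => exact SimpleGraph.Reachable.refl _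
    | cons h p ih =>
      exact (reach_of_adj G σ _ _ _ h rfl).trans ih
  have : Nonempty V := hc.nonempty
  exact SimpleGraph.Connected.mk (fun a b => hmono a b (hc.preconnected a b))

lemma card_le_good_edges (G : SimpleGraph V) (σ : V ≃ Fin (Fintype.card V))
    (hc : G.Connected) :
    Fintype.card V ≤ (G.edgeFinset.filter (fun e => Good G σ e)).card + 1 := by
  classical
  set H := Hgraph G σ with hH
  have hHc : H.Connected := hgraph_connected G σ hc
  have : Nonempty V := hc.nonempty
  obtain ⟨r⟩ := this
  have key : ∀ v : V, v ≠ r → ∃ u : V, H.Adj v u ∧ H.dist u r < H.dist v r := by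
    intro v hv
    have hr : H.Reachable v r := hHc.preconnected v r
    have hd : 0 < H.dist v r := hr.pos_dist_of_ne hv
    obtain ⟨p, hp⟩ := hr.exists_walk_length_eq_dist
    cases p with
    | nil => exact absurd rfl hv
    | @cons _ u _ hadj q =>
      refine ⟨u, hadj, ?_⟩
      have h1 : H.dist u r ≤ q.length := H.dist_le q
      have h2 : q.length + 1 = H.dist v r := by
        simpa [SimpleGraph.Walk.length_cons] using hp
      omega
  let nxt : V → V := fun v => if hv : v = r then v else (key v hv).choose
  have hnxt : ∀ v : V, v ≠ r → H.Adj v (nxt v) ∧ H.dist (nxt v) r < H.dist v r := by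
    intro v hv
    simpa [nxt, hv] using (key v hv).choose_spec
  have hinj : Set.InjOn (fun v => s(v, nxt v)) ↑(Finset.univ.erase r) := by
    intro v hv w hw hEq
    simp only [Finset.coe_erase, Set.mem_diff, Set.mem_singleton_iff] at hv hw
    rcases Sym2.eq_iff.1 hEq with ⟨h1, h2⟩ | ⟨h1, h2⟩
    · exact h1
    · exfalso
      have d1 := (hnxt v (by simpa using hv.2)).2
      have d2 := (hnxt w (by simpa using hw.2)).2
      rw [← h1] at d2
      rw [h2] at d1
      omega
  have hmaps : ∀ v ∈ Finset.univ.erase r,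
      s(v, nxt v) ∈ G.edgeFinset.filter (fun e => Good G σ e) := by
    intro v hv
    have hv' : v ≠ r := Finset.ne_of_mem_erase hv
    have hadj := (hnxt v hv').1
    rw [Finset.mem_filter, SimpleGraph.mem_edgeFinset]
    exact hadj
  have := Finset.card_le_card_of_injOn _ hmaps hinj
  rw [Finset.card_erase_of_mem (Finset.mem_univ r), Finset.card_univ] at this
  omega


variable (G : SimpleGraph V)

noncomputable def Fmin (T : Finset V) (hT : T.Nonempty) (σ : V ≃ Fin (Fintype.card V)) : V :=
  σ.symm ((T.image σ).min' (hT.image σ))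

lemma Fmin_mem (T : Finset V) (hT : T.Nonempty) (σ : V ≃ Fin (Fintype.card V)) :
    Fmin T hT σ ∈ T := by
  obtain ⟨x, hx, hEq⟩ := Finset.mem_image.1 ((T.image σ).min'_mem (hT.image σ))
  have : Fmin T hT σ = x := by
    rw [Fmin, ← hEq, Equiv.symm_apply_apply]
  rwa [this]

lemma Fmin_min (T : Finset V) (hT : T.Nonempty) (σ : V ≃ Fin (Fintype.card V))
    (w : V) (hw : w ∈ T) : σ (Fmin T hT σ) ≤ σ w := by
  rw [Fmin, Equiv.apply_symm_apply]
  exact Finset.min'_le _ _ (Finset.mem_image_of_mem σ hw)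

lemma Fmin_swap (T : Finset V) (hT : T.Nonempty) (σ : V ≃ Fin (Fintype.card V))
    {x y : V} (hx : x ∈ T) (hy : y ∈ T) :
    Fmin T hT ((Equiv.swap x y).trans σ) = Equiv.swap x y (Fmin T hT σ) := by
  have hswapT : T.image (Equiv.swap x y) = T := by
    apply Finset.eq_of_subset_of_card_le
    · intro w hw
      obtain ⟨z, hz, hEq⟩ := Finset.mem_image.1 hw
      rcases eq_or_ne z x with rfl | hzx
      · rw [← hEq, Equiv.swap_apply_left]; exact hy
      rcases eq_or_ne z y with rfl | hzy
      · rw [← hEq, Equiv.swap_apply_right]; exact hx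
      · rw [← hEq, Equiv.swap_apply_of_ne_of_ne hzx hzy]; exact hz
    · rw [Finset.card_image_of_injective _ (Equiv.swap x y).injective]
  have himg : T.image ((Equiv.swap x y).trans σ) = T.image σ := by
    rw [Equiv.coe_trans, ← Finset.image_image, hswapT]
  rw [Fmin, Fmin]
  have hmin : (T.image ((Equiv.swap x y).trans σ)).min'
      (hT.image ((Equiv.swap x y).trans σ)) = (T.image σ).min' (hT.image σ) := by
    congr 1
  rw [hmin]
  simp [Equiv.symm_trans_apply]

lemma fiber_card_eq (T : Finset V) (hT : T.Nonempty) {x y : V} (hx : x ∈ T) (hy : y ∈ T) :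
    (Finset.univ.filter fun σ : V ≃ Fin (Fintype.card V) => Fmin T hT σ = x).card =
    (Finset.univ.filter fun σ : V ≃ Fin (Fintype.card V) => Fmin T hT σ = y).card := by
  apply Finset.card_bij' (fun σ _ => (Equiv.swap x y).trans σ)
    (fun σ _ => (Equiv.swap x y).trans σ)
  · intro σ hσ
    rw [Finset.mem_filter] at hσ ⊢
    refine ⟨Finset.mem_univ _, ?_⟩
    rw [Fmin_swap T hT σ hx hy, hσ.2, Equiv.swap_apply_left]
  · intro σ hσ
    rw [Finset.mem_filter] at hσ ⊢
    refine ⟨Finset.mem_univ _, ?_⟩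
    rw [Fmin_swap T hT σ hx hy, hσ.2, Equiv.swap_apply_right]
  · intro σ _
    ext w
    simp [Equiv.swap_apply_self]
  · intro σ _
    ext w
    simp [Equiv.swap_apply_self]

lemma good_count {k : ℕ} {u v : V} (hadj : G.Adj u v)
    (htr : k ≤ {w : V | G.Adj u w ∧ G.Adj v w}.ncard) :
    (k + 2) * (Finset.univ.filter fun σ : V ≃ Fin (Fintype.card V) =>
        Good G σ s(u, v)).card ≤ 2 * Fintype.card (V ≃ Fin (Fintype.card V)) := by
  classical
  set T : Finset V := eS G s(u, v) with hTdef
  have hu : u ∈ T := mem_eS.2 (Or.inl (Sym2.mem_mk_left u v))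
  have hv : v ∈ T := mem_eS.2 (Or.inl (Sym2.mem_mk_right u v))
  have huv : u ≠ v := hadj.ne
  have hT : T.Nonempty := ⟨u, hu⟩
  -- cardinality of T
  have hcardT : k + 2 ≤ T.card := by
    have hdesc : T = insert u (insert v
        (Finset.univ.filter fun w => G.Adj u w ∧ G.Adj v w)) := by
      ext w
      simp only [hTdef, mem_eS, Finset.mem_insert, Finset.mem_filter, Finset.mem_univ,
        true_and, Sym2.mem_iff]
      constructor
      · rintro (h | h)
        · tauto
        · exact Or.inr (Or.inr ⟨h u (Or.inl rfl), h v (Or.inr rfl)⟩)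
      · rintro (rfl | rfl | ⟨h1, h2⟩)
        · exact Or.inl (Or.inl rfl)
        · exact Or.inl (Or.inr rfl)
        · refine Or.inr ?_
          intro x hx
          rcases hx with rfl | rfl
          · exact h1
          · exact h2
    have hvnot : v ∉ (Finset.univ.filter fun w => G.Adj u w ∧ G.Adj v w) := by
      simp only [Finset.mem_filter]
      rintro ⟨-, h2⟩
      exact G.loopless.irrefl v h2.2
    have hunot : u ∉ insert v (Finset.univ.filter fun w => G.Adj u w ∧ G.Adj v w) := by
      simp only [Finset.mem_insert, Finset.mem_filter]
      rintro (rfl | ⟨-, h1, -⟩)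
      · exact huv rfl
      · exact G.loopless.irrefl u h1
    have hcn : {w : V | G.Adj u w ∧ G.Adj v w}.ncard =
        (Finset.univ.filter fun w => G.Adj u w ∧ G.Adj v w).card := by
      rw [← Set.ncard_coe_finset]
      congr 1
      ext w
      simp
    rw [hdesc, Finset.card_insert_of_notMem hunot, Finset.card_insert_of_notMem hvnot]
    rw [hcn] at htr
    omega
  -- fibers
  set fib : V → ℕ := fun x =>
    (Finset.univ.filter fun σ : V ≃ Fin (Fintype.card V) => Fmin T hT σ = x).card with hfib
  have hsum : Fintype.card (V ≃ Fin (Fintype.card V)) = ∑ x ∈ T, fib x := by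
    rw [← Finset.card_univ]
    exact Finset.card_eq_sum_card_fiberwise (fun σ _ => Fmin_mem T hT σ)
  have hfibeq : ∀ x ∈ T, fib x = fib u := fun x hx => fiber_card_eq T hT hx hu
  have hNval : Fintype.card (V ≃ Fin (Fintype.card V)) = T.card * fib u := by
    rw [hsum, Finset.sum_congr rfl hfibeq, Finset.sum_const, smul_eq_mul]
  -- good count
  have hgood : (Finset.univ.filter fun σ : V ≃ Fin (Fintype.card V) =>
      Good G σ s(u, v)).card = fib u + fib v := by
    have hiff : ∀ σ : V ≃ Fin (Fintype.card V),
        Good G σ s(u, v) ↔ (Fmin T hT σ = u ∨ Fmin T hT σ = v) := by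
      intro σ
      constructor
      · rintro ⟨w, hwe, hwmin⟩
        have hwT : w ∈ T := mem_eS.2 (Or.inl hwe)
        have h1 : σ (Fmin T hT σ) ≤ σ w := Fmin_min T hT σ w hwT
        have h2 : σ w ≤ σ (Fmin T hT σ) := hwmin _ (Fmin_mem T hT σ)
        have : Fmin T hT σ = w := σ.injective (le_antisymm h1 h2)
        rw [this]
        exact Sym2.mem_iff.1 hwe
      · rintro (hEq | hEq)
        · exact ⟨u, Sym2.mem_mk_left u v, fun w hw => hEq ▸ Fmin_min T hT σ w hw⟩
        · exact ⟨v, Sym2.mem_mk_right u v, fun w hw => hEq ▸ Fmin_min T hT σ w hw⟩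
    have hdisj : Disjoint
        (Finset.univ.filter fun σ : V ≃ Fin (Fintype.card V) => Fmin T hT σ = u)
        (Finset.univ.filter fun σ : V ≃ Fin (Fintype.card V) => Fmin T hT σ = v) := by
      refine Finset.disjoint_left.2 ?_
      intro σ h1 h2
      rw [Finset.mem_filter] at h1 h2
      exact huv (h1.2 ▸ h2.2)
    rw [Finset.filter_congr (fun σ _ => by rw [hiff σ]), Finset.filter_or,
      Finset.card_union_of_disjoint hdisj]
  have hfv : fib v = fib u := hfibeq v hv
  rw [hgood, hfv, hNval]
  have : k + 2 ≤ T.card := hcardT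
  nlinarith [fib u, Nat.zero_le (fib u)]

lemma key_nat (k : ℕ) (hc : G.Connected)
    (h1 : ∀ ⦃u v : V⦄, G.Adj u v → k ≤ {w : V | G.Adj u w ∧ G.Adj v w}.ncard) :
    (k + 2) * (Fintype.card V - 1) ≤ 2 * G.edgeFinset.card := by
  classical
  set n := Fintype.card V with hn
  set N := Fintype.card (V ≃ Fin n) with hNdef
  have hNpos : 0 < N := @Fintype.card_pos _ _ ⟨Fintype.equivFin V⟩
  -- step 2 : for each σ, at least n - 1 good edges
  have step1 : ∀ σ : V ≃ Fin n, n - 1 ≤ (G.edgeFinset.filter (fun e => Good G σ e)).card := by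
    intro σ
    have := card_le_good_edges G σ hc
    omega
  have step2 : N * (n - 1) ≤
      ∑ σ : V ≃ Fin n, (G.edgeFinset.filter (fun e => Good G σ e)).card := by
    calc N * (n - 1) = ∑ _σ : V ≃ Fin n, (n - 1) := by
          rw [Finset.sum_const, Finset.card_univ, smul_eq_mul]
      _ ≤ _ := Finset.sum_le_sum (fun σ _ => step1 σ)
  have step3 : ∑ σ : V ≃ Fin n, (G.edgeFinset.filter (fun e => Good G σ e)).card =
      ∑ e ∈ G.edgeFinset, (Finset.univ.filter fun σ : V ≃ Fin n => Good G σ e).card := by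
    simp only [Finset.card_filter]
    rw [Finset.sum_comm]
  have step4 : ∀ e ∈ G.edgeFinset,
      (k + 2) * (Finset.univ.filter fun σ : V ≃ Fin n => Good G σ e).card ≤ 2 * N := by
    intro e he
    rw [SimpleGraph.mem_edgeFinset] at he
    induction e with
    | _ u v =>
      rw [SimpleGraph.mem_edgeSet] at he
      exact good_count G he (h1 he)
  have step5 : (k + 2) * ∑ e ∈ G.edgeFinset,
      (Finset.univ.filter fun σ : V ≃ Fin n => Good G σ e).card ≤
      G.edgeFinset.card * (2 * N) := by
    rw [Finset.mul_sum]
    calc ∑ e ∈ G.edgeFinset, (k + 2) *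
          (Finset.univ.filter fun σ : V ≃ Fin n => Good G σ e).card
        ≤ ∑ _e ∈ G.edgeFinset, 2 * N := Finset.sum_le_sum step4
      _ = G.edgeFinset.card * (2 * N) := by rw [Finset.sum_const, smul_eq_mul]
  have chain : ((k + 2) * (n - 1)) * N ≤ (2 * G.edgeFinset.card) * N := by
    calc ((k + 2) * (n - 1)) * N = (k + 2) * (N * (n - 1)) := by ring
      _ ≤ (k + 2) * ∑ σ : V ≃ Fin n, (G.edgeFinset.filter (fun e => Good G σ e)).card :=
          Nat.mul_le_mul_left _ step2
      _ = (k + 2) * ∑ e ∈ G.edgeFinset,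
            (Finset.univ.filter fun σ : V ≃ Fin n => Good G σ e).card := by rw [step3]
      _ ≤ G.edgeFinset.card * (2 * N) := step5
      _ = (2 * G.edgeFinset.card) * N := by ring
  exact Nat.le_of_mul_le_mul_right chain hNpos

end TrussAux

theorem connected_truss_min_edges {V : Type*} [Fintype V] (G : SimpleGraph V)
    (k : ℕ) (hc : G.Connected) (h : G.IsTruss k) :
    ((Fintype.card V : ℚ) - 1) * (1 + (k : ℚ) / 2) ≤ (G.edgeSet.ncard : ℚ) := by
  classical
  have hkey := TrussAux.key_nat G k hc h.2
  have hn : 1 ≤ Fintype.card V := @Fintype.card_pos _ _ hc.nonempty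
  have hm : G.edgeSet.ncard = G.edgeFinset.card := by
    rw [← SimpleGraph.coe_edgeFinset, Set.ncard_coe_finset]
  rw [hm]
  have hcast : ((k : ℚ) + 2) * ((Fintype.card V : ℚ) - 1) ≤ 2 * (G.edgeFinset.card : ℚ) := by
    have h1 : (((k + 2) * (Fintype.card V - 1) : ℕ) : ℚ) ≤ ((2 * G.edgeFinset.card : ℕ) : ℚ) := by
      exact_mod_cast hkey
    push_cast [Nat.cast_sub hn] at h1
    convert h1 using 2 <;> push_cast <;> ring_nf
  nlinarith [hcast]
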